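/- Let n ≥ 4. In the Matsuo algebra M = M_{1/2}(Wr(2,n), D) over a field of characteristic 0, the set {r(i,j)(n-1,n) : 1 ≤ i < j < n-1} ∪ {r(1,n-1)(i,n) : i ≠ 1, n-1, n} is linearly independent and has cardinality n(n-3)/2, where r(i,j)(k,l) = b_{i,j} - b_{i,l} - b_{j,k} + b_{k,l} + c_{i,j} - c_{i,l} - c_{j,k} + c_{k,l}. -/

import Mathlib

/-- The action of `Sym(n)` on the base group by permuting coordinates. -/
def permMulAut (T : Type*) [Group T] (n : ℕ) :
    Equiv.Perm (Fin n) →* MulAut (Fin n → T) where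
  toFun σ :=
    { toFun := fun f => f ∘ σ.symm
      invFun := fun f => f ∘ σ
      left_inv := fun f => by funext i; simp
      right_inv := fun f => by funext i; simp
      map_mul' := fun f g => rfl }
  map_one' := by
    apply MulEquiv.ext; intro f; funext i; rfl
  map_mul' := fun σ τ => by
    apply MulEquiv.ext; intro f; funext i; rfl

/-- The wreath product `2 wr Sym(n)`; the group `Wr(2,n) = U : Sym(n)` is the subgroup
generated by the 3-transposition class `D` below. -/
abbrev Wreath2 (n : ℕ) :=
  SemidirectProduct (Fin n → Multiplicative (ZMod 2)) (Equiv.Perm (Fin n))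
    (permMulAut (Multiplicative (ZMod 2)) n)

/-- The point `b_{i,j} = (i,j)` of the Fischer space of `Wr(2,n)`. -/
def bPoint (n : ℕ) (i j : Fin n) : Wreath2 n :=
  SemidirectProduct.inr (Equiv.swap i j)

/-- The point `c_{i,j} = (e_i + e_j)(i,j)` of the Fischer space of `Wr(2,n)`. -/
def cPoint (n : ℕ) (i j : Fin n) : Wreath2 n :=
  SemidirectProduct.inl
      (Pi.mulSingle i (Multiplicative.ofAdd (1 : ZMod 2)) *
        Pi.mulSingle j (Multiplicative.ofAdd (1 : ZMod 2))) *
    SemidirectProduct.inr (Equiv.swap i j)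

/-- The 3-transposition class `D` of `Wr(2,n)`. -/
def DWr2 (n : ℕ) : Set (Wreath2 n) :=
  {w | ∃ i j : Fin n, i ≠ j ∧ (w = bPoint n i j ∨ w = cPoint n i j)}

/-- The radical element
`r(i,j)(k,l) = b_{i,j} - b_{i,l} - b_{j,k} + b_{k,l} + c_{i,j} - c_{i,l} - c_{j,k} + c_{k,l}`
of the Matsuo algebra `M_{1/2}(Wr(2,n), D)`, written in the basis `D` via `ι`. -/
def rVec (F : Type*) [Field F] (n : ℕ) (M : Type*) [AddCommGroup M] [Module F M]
    (ι : Wreath2 n → M) (i j k l : Fin n) : M :=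
  ι (bPoint n i j) - ι (bPoint n i l) - ι (bPoint n j k) + ι (bPoint n k l)
    + (ι (cPoint n i j) - ι (cPoint n i l) - ι (cPoint n j k) + ι (cPoint n k l))

lemma swap_eq_swap_iff' {α : Type*} [DecidableEq α] {i j k l : α} (hij : i ≠ j) :
    Equiv.swap i j = Equiv.swap k l ↔ (i = k ∧ j = l) ∨ (i = l ∧ j = k) := by
  constructor
  · intro h
    have h1 : Equiv.swap k l i = j := by rw [← h, Equiv.swap_apply_left]
    rcases eq_or_ne i k with hik | hik
    · subst hik
      rw [Equiv.swap_apply_left] at h1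
      exact Or.inl ⟨rfl, h1.symm⟩
    · rcases eq_or_ne i l with hil | hil
      · subst hil
        rw [Equiv.swap_apply_right] at h1
        exact Or.inr ⟨rfl, h1.symm⟩
      · rw [Equiv.swap_apply_of_ne_of_ne hik hil] at h1
        exact absurd h1 hij
  · rintro (⟨rfl, rfl⟩ | ⟨rfl, rfl⟩)
    · rfl
    · exact Equiv.swap_comm _ _

lemma bPoint_eq_iff {n : ℕ} {i j k l : Fin n} (hij : i ≠ j) :
    bPoint n i j = bPoint n k l ↔ (i = k ∧ j = l) ∨ (i = l ∧ j = k) := by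
  rw [bPoint, bPoint, SemidirectProduct.inr_injective.eq_iff, swap_eq_swap_iff' hij]

lemma cPoint_ne_bPoint {n : ℕ} {i j k l : Fin n} (hij : i ≠ j) :
    cPoint n i j ≠ bPoint n k l := by
  intro h
  have h1 := congrArg SemidirectProduct.left h
  simp only [cPoint, bPoint, SemidirectProduct.mul_left, SemidirectProduct.left_inl,
    SemidirectProduct.right_inl, SemidirectProduct.left_inr, map_one, MulEquiv.coe_mk,
    mul_one] at h1
  have h2 := congrFun h1 i
  simp only [Pi.mul_apply, Pi.mulSingle_eq_same, Pi.mulSingle_eq_of_ne hij,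
    mul_one, Pi.one_apply] at h2
  simp at h2

set_option linter.all false
set_option maxHeartbeats 2000000 in
/-- Let `n ≥ 4`. In the Matsuo algebra `M = M_{1/2}(Wr(2,n), D)` over a
field of characteristic 0 (with basis `D`, here expressed by `ι` being linearly
independent on `D` and spanning `M`), the set
`{r(i,j)(n-1,n) : 1 ≤ i < j < n-1} ∪ {r(1,n-1)(i,n) : i ≠ 1, n-1, n}`
is linearly independent and has cardinality `n(n-3)/2`. (Indices are 0-based: `a`, `p`,
`q` stand for the 1-based indices `1`, `n-1`, `n`.) -/
theorem statement14 (F : Type*) [Field F] [CharZero F]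
    (n : ℕ) (hn : 4 ≤ n)
    (M : Type*) [AddCommGroup M] [Module F M] (ι : Wreath2 n → M)
    (hind : LinearIndependent F (fun x : DWr2 n => ι x.val))
    (hspan : Submodule.span F (ι '' DWr2 n) = ⊤)
    (a p q : Fin n) (ha : (a : ℕ) = 0) (hp : (p : ℕ) = n - 2) (hq : (q : ℕ) = n - 1)
    (S : Set M)
    (hS : S = {v : M | (∃ i j : Fin n, i < j ∧ j < p ∧ v = rVec F n M ι i j p q) ∨
        (∃ i : Fin n, i ≠ a ∧ i ≠ p ∧ i ≠ q ∧ v = rVec F n M ι a p i q)}) :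
    LinearIndependent F (Subtype.val : S → M) ∧ S.ncard = n * (n - 3) / 2 := by
  classical
  subst hS
  have fne : ∀ {x y : Fin n}, (x : ℕ) ≠ (y : ℕ) → x ≠ y :=
    fun h h' => h (by rw [h'])
  have fne' : ∀ {x y : Fin n}, x ≠ y → (x : ℕ) ≠ (y : ℕ) :=
    fun h h' => h (Fin.ext h')
  -- the basis
  have hsp : ⊤ ≤ Submodule.span F (Set.range fun x : DWr2 n => ι x.val) := by
    rw [← Set.image_eq_range, hspan]
  set B : Module.Basis (DWr2 n) F M := Module.Basis.mk hind hsp with hBdef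
  have hbmem : ∀ {i j : Fin n}, i ≠ j → bPoint n i j ∈ DWr2 n :=
    fun h => ⟨_, _, h, Or.inl rfl⟩
  have hcmem : ∀ {i j : Fin n}, i ≠ j → cPoint n i j ∈ DWr2 n :=
    fun h => ⟨_, _, h, Or.inr rfl⟩
  have hcoord : ∀ (d : DWr2 n) (x : Wreath2 n) (hx : x ∈ DWr2 n),
      B.coord d (ι x) = if x = d.val then 1 else 0 := by
    intro d x hx
    have hx' : ι x = B ⟨x, hx⟩ := by rw [hBdef, Module.Basis.mk_apply]
    rw [hx', Module.Basis.coord_apply, Module.Basis.repr_self, Finsupp.single_apply]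
    simp [Subtype.ext_iff]
  have hcr : ∀ (i j : Fin n) (d : DWr2 n), d.val = bPoint n i j →
      ∀ (i' j' k' l' : Fin n), i' ≠ j' → i' ≠ l' → j' ≠ k' → k' ≠ l' →
      B.coord d (rVec F n M ι i' j' k' l') =
        (if bPoint n i' j' = bPoint n i j then 1 else 0)
        - (if bPoint n i' l' = bPoint n i j then 1 else 0)
        - (if bPoint n j' k' = bPoint n i j then 1 else 0)
        + (if bPoint n k' l' = bPoint n i j then 1 else 0) := by
    intro i j d hd i' j' k' l' h1 h2 h3 h4
    rw [rVec]
    simp only [map_add, map_sub]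
    rw [hcoord d _ (hbmem h1), hcoord d _ (hbmem h2), hcoord d _ (hbmem h3),
      hcoord d _ (hbmem h4), hcoord d _ (hcmem h1), hcoord d _ (hcmem h2),
      hcoord d _ (hcmem h3), hcoord d _ (hcmem h4), hd,
      if_neg (cPoint_ne_bPoint h1), if_neg (cPoint_ne_bPoint h2),
      if_neg (cPoint_ne_bPoint h3), if_neg (cPoint_ne_bPoint h4)]
    ring
  -- the parametrizing family
  let v : {x : Fin n × Fin n // x.1 < x.2 ∧ x.2 < p} ⊕
      {i : Fin n // i ≠ a ∧ i ≠ p ∧ i ≠ q} → M :=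
    Sum.elim (fun x => rVec F n M ι x.1.1 x.1.2 p q) (fun x => rVec F n M ι a p x.1 q)
  have hvli : LinearIndependent F v := by
    rw [Fintype.linearIndependent_iff]
    intro g hg
    have hg1 : ∀ x : {x : Fin n × Fin n // x.1 < x.2 ∧ x.2 < p}, g (Sum.inl x) = 0 := by
      rintro ⟨⟨i, j⟩, hij, hjp⟩
      have hij' : (i : ℕ) < j := hij
      have hjp' : (j : ℕ) < n - 2 := by rw [Fin.lt_def, hp] at hjp; exact hjp
      set d : DWr2 n := ⟨bPoint n i j, hbmem (fne (by omega))⟩ with hddef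
      have hd : d.val = bPoint n i j := rfl
      have key : ∀ t, B.coord d (v t) =
          if t = Sum.inl ⟨(i, j), hij, hjp⟩ then 1 else 0 := by
        rintro (⟨⟨i2, j2⟩, hij2, hjp2⟩ | ⟨i2, h2a, h2p, h2q⟩)
        · have hij2' : (i2 : ℕ) < j2 := hij2
          have hjp2' : (j2 : ℕ) < n - 2 := by rw [Fin.lt_def, hp] at hjp2; exact hjp2
          show B.coord d (rVec F n M ι i2 j2 p q) = _
          rw [hcr i j d hd i2 j2 p q (fne (by omega)) (fne (by omega))
            (fne (by omega)) (fne (by omega))]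
          simp only [bPoint_eq_iff (show i2 ≠ j2 from fne (by omega)),
            bPoint_eq_iff (show i2 ≠ q from fne (by omega)),
            bPoint_eq_iff (show j2 ≠ p from fne (by omega)),
            bPoint_eq_iff (show p ≠ q from fne (by omega)),
            Sum.inl.injEq, Subtype.mk.injEq, Prod.mk.injEq, Fin.ext_iff, and_true, true_and]
          split_ifs <;> first | (exfalso; omega) | norm_num
        · have h2a' := fne' h2a
          have h2p' := fne' h2p
          have h2q' := fne' h2q
          show B.coord d (rVec F n M ι a p i2 q) = _
          rw [hcr i j d hd a p i2 q (fne (by omega)) (fne (by omega))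
            (fne (by omega)) (fne (by omega)),
            if_neg (Sum.inr_ne_inl (b := (⟨i2, h2a, h2p, h2q⟩ : {i : Fin n // i ≠ a ∧ i ≠ p ∧ i ≠ q})))]
          simp only [bPoint_eq_iff (show a ≠ p from fne (by omega)),
            bPoint_eq_iff (show a ≠ q from fne (by omega)),
            bPoint_eq_iff (show p ≠ i2 from fne (by omega)),
            bPoint_eq_iff (show i2 ≠ q from fne (by omega)), Fin.ext_iff, and_true, true_and]
          split_ifs <;> first | (exfalso; omega) | norm_num
      have h0 : (B.coord d) (∑ t, g t • v t) = 0 := by rw [hg, map_zero]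
      rw [map_sum] at h0
      simp only [map_smul, smul_eq_mul] at h0
      have h0' : ∑ t, g t * B.coord d (v t) =
          ∑ t, g t * (if t = Sum.inl ⟨(i, j), hij, hjp⟩ then (1 : F) else 0) :=
        Finset.sum_congr rfl (fun t _ => by rw [key t])
      rw [h0'] at h0
      simpa [mul_ite] using h0
    have hg2 : ∀ x : {i : Fin n // i ≠ a ∧ i ≠ p ∧ i ≠ q}, g (Sum.inr x) = 0 := by
      rintro ⟨i, hia, hip, hiq⟩
      have hia' := fne' hia
      have hip' := fne' hip
      have hiq' := fne' hiq
      set d : DWr2 n := ⟨bPoint n i q, hbmem (fne (by omega))⟩ with hddef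
      have hd : d.val = bPoint n i q := rfl
      have key2 : ∀ y : {i : Fin n // i ≠ a ∧ i ≠ p ∧ i ≠ q},
          B.coord d (v (Sum.inr y)) = if y = ⟨i, hia, hip, hiq⟩ then 1 else 0 := by
        rintro ⟨i2, h2a, h2p, h2q⟩
        have h2a' := fne' h2a
        have h2p' := fne' h2p
        have h2q' := fne' h2q
        show B.coord d (rVec F n M ι a p i2 q) = _
        rw [hcr i q d hd a p i2 q (fne (by omega)) (fne (by omega))
          (fne (by omega)) (fne (by omega))]
        simp only [bPoint_eq_iff (show a ≠ p from fne (by omega)),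
          bPoint_eq_iff (show a ≠ q from fne (by omega)),
          bPoint_eq_iff (show p ≠ i2 from fne (by omega)),
          bPoint_eq_iff (show i2 ≠ q from fne (by omega)),
          Subtype.mk.injEq, Fin.ext_iff, and_true, true_and]
        split_ifs <;> first | (exfalso; omega) | norm_num
      have h0 : (B.coord d) (∑ t, g t • v t) = 0 := by rw [hg, map_zero]
      rw [map_sum] at h0
      simp only [map_smul, smul_eq_mul] at h0
      rw [Fintype.sum_sum_type] at h0
      have hz : ∑ x1, g (Sum.inl x1) * B.coord d (v (Sum.inl x1)) = 0 :=
        Finset.sum_eq_zero (fun x1 _ => by rw [hg1 x1, zero_mul])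
      rw [hz, zero_add] at h0
      have h0' : ∑ y, g (Sum.inr y) * B.coord d (v (Sum.inr y)) =
          ∑ y, g (Sum.inr y) * (if y = ⟨i, hia, hip, hiq⟩ then (1 : F) else 0) :=
        Finset.sum_congr rfl (fun y _ => by rw [key2 y])
      rw [h0'] at h0
      simpa [mul_ite] using h0
    rintro (x | x)
    · exact hg1 x
    · exact hg2 x
  -- the set is the range of `v`
  have hSr : {v' : M | (∃ i j : Fin n, i < j ∧ j < p ∧ v' = rVec F n M ι i j p q) ∨
      (∃ i : Fin n, i ≠ a ∧ i ≠ p ∧ i ≠ q ∧ v' = rVec F n M ι a p i q)} = Set.range v := by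
    ext m
    constructor
    · rintro (⟨i, j, h1, h2, rfl⟩ | ⟨i, h1, h2, h3, rfl⟩)
      · exact ⟨Sum.inl ⟨(i, j), h1, h2⟩, rfl⟩
      · exact ⟨Sum.inr ⟨i, h1, h2, h3⟩, rfl⟩
    · rintro ⟨(⟨⟨i, j⟩, h1, h2⟩ | ⟨i, h1, h2, h3⟩), rfl⟩
      · exact Or.inl ⟨i, j, h1, h2, rfl⟩
      · exact Or.inr ⟨i, h1, h2, h3, rfl⟩
  -- cardinalities
  have hT1 : Fintype.card {x : Fin n × Fin n // x.1 < x.2 ∧ x.2 < p}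
      = (n - 2) * (n - 3) / 2 := by
    have e : {x : Fin n × Fin n // x.1 < x.2 ∧ x.2 < p} ≃ Σ j : Fin (n - 2), Fin j.val :=
      { toFun := fun x => ⟨⟨x.1.2.val, by have h := x.2.2; rw [Fin.lt_def, hp] at h; exact h⟩,
          ⟨x.1.1.val, x.2.1⟩⟩
        invFun := fun y => ⟨(⟨y.2.val, by have := y.2.isLt; have := y.1.isLt; omega⟩,
            ⟨y.1.val, by have := y.1.isLt; omega⟩),
          Fin.mk_lt_mk.mpr y.2.isLt, by
            have h := y.1.isLt
            rw [Fin.lt_def]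
            show (y.1 : ℕ) < (p : ℕ)
            omega⟩
        left_inv := fun _ => rfl
        right_inv := fun _ => rfl }
    rw [Fintype.card_congr e, Fintype.card_sigma]
    simp only [Fintype.card_fin]
    rw [Fin.sum_univ_eq_sum_range (fun k => k) (n - 2), Finset.sum_range_id]
    have h32 : n - 2 - 1 = n - 3 := by omega
    rw [h32]
  have hT2 : Fintype.card {i : Fin n // i ≠ a ∧ i ≠ p ∧ i ≠ q} = n - 3 := by
    rw [Fintype.card_subtype]
    have hfe : (Finset.univ.filter fun i : Fin n => i ≠ a ∧ i ≠ p ∧ i ≠ q) =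
        Finset.univ \ ({a, p, q} : Finset (Fin n)) := by
      ext i
      simp only [Finset.mem_filter, Finset.mem_univ, true_and, Finset.mem_sdiff,
        Finset.mem_insert, Finset.mem_singleton]
      tauto
    rw [hfe, Finset.card_sdiff_of_subset (Finset.subset_univ _), Finset.card_univ, Fintype.card_fin]
    have h3 : ({a, p, q} : Finset (Fin n)).card = 3 := by
      rw [Finset.card_insert_of_notMem (by
          simp only [Finset.mem_insert, Finset.mem_singleton]
          push_neg
          exact ⟨fne (by omega), fne (by omega)⟩),
        Finset.card_insert_of_notMem (by
          simp only [Finset.mem_singleton]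
          exact fne (by omega)),
        Finset.card_singleton]
    rw [h3]
  constructor
  · rw [hSr]
    exact hvli.linearIndepOn_id
  · rw [hSr, ← Set.image_univ, Set.ncard_image_of_injective _ hvli.injective,
      Set.ncard_univ, Nat.card_eq_fintype_card, Fintype.card_sum, hT1, hT2]
    have hdvd : 2 ∣ (n - 2) * (n - 3) := by
      have he := Nat.even_mul_succ_self (n - 3)
      rw [show n - 3 + 1 = n - 2 from by omega, mul_comm] at he
      exact he.two_dvd
    obtain ⟨c, hc⟩ := hdvd
    have h1 : n * (n - 3) = 2 * c + 2 * (n - 3) := by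
      have h4 : n - 2 + 2 = n := by omega
      calc n * (n - 3) = (n - 2 + 2) * (n - 3) := by rw [h4]
        _ = (n - 2) * (n - 3) + 2 * (n - 3) := add_mul _ _ _
        _ = 2 * c + 2 * (n - 3) := by rw [hc]
    rw [hc, h1]
    omega
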